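/- arXiv:math/0206239 — 2 statements merged into one kernel-verified Lean document; each statement's English description precedes it below -/
import Mathlib

section
/- Let ν be real, b > 0 and 0 < δ < 1/2. Then as z → +∞ one has the asymptotic equivalence ∫₀^∞ y^ν e^{−y − b y^δ − z y^{−1/2}} dy ∼ 2 (π/3)^{1/2} (z²/4)^{(2ν+1)/6} e^{−3 (z²/4)^{1/3} − b (z²/4)^{δ/3}}. -/
open MeasureTheory Filter Asymptotics Set

noncomputable def phi14 (u : ℝ) : ℝ := u + 2 * u ^ (-(1:ℝ)/2)

lemma rpow_neg_half {u : ℝ} (hu : 0 < u) : u ^ (-(1:ℝ)/2) = (Real.sqrt u)⁻¹ := by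
  rw [show (-(1:ℝ)/2) = -(1/2) by ring, Real.rpow_neg hu.le, ← Real.sqrt_eq_rpow]

lemma phi14_eq {u : ℝ} (hu : 0 < u) :
    phi14 u - 3 = (Real.sqrt u - 1)^2 * (Real.sqrt u + 2) / Real.sqrt u := by
  have hs : 0 < Real.sqrt u := Real.sqrt_pos.mpr hu
  have h2 : u = Real.sqrt u * Real.sqrt u := (Real.mul_self_sqrt hu.le).symm
  rw [phi14, rpow_neg_half hu]
  field_simp
  nlinarith [h2]

lemma phi14_sub_three_nonneg {u : ℝ} (hu : 0 < u) : 0 ≤ phi14 u - 3 := by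
  have hs : 0 < Real.sqrt u := Real.sqrt_pos.mpr hu
  rw [phi14_eq hu]
  positivity

lemma phi14_tail {u : ℝ} (hu : 0 < u) (h : u ≤ 1/2 ∨ 3/2 ≤ u) : 1/25 ≤ phi14 u - 3 := by
  have hs : 0 < Real.sqrt u := Real.sqrt_pos.mpr hu
  rw [phi14_eq hu]
  rcases h with h | h
  · have h1 : Real.sqrt u ≤ 3/4 := by
      rw [show (3:ℝ)/4 = Real.sqrt ((3/4)^2) by rw [Real.sqrt_sq]; norm_num]
      exact Real.sqrt_le_sqrt (by nlinarith)
    have h2 : (Real.sqrt u - 1)^2 ≥ 1/16 := by nlinarith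
    rw [le_div_iff₀ hs]
    nlinarith
  · have h1 : (6:ℝ)/5 ≤ Real.sqrt u := by
      rw [show (6:ℝ)/5 = Real.sqrt ((6/5)^2) by rw [Real.sqrt_sq]; norm_num]
      exact Real.sqrt_le_sqrt (by nlinarith)
    have h2 : (Real.sqrt u - 1)^2 ≥ 1/25 := by nlinarith
    rw [le_div_iff₀ hs]
    nlinarith

lemma phi14_quad {u : ℝ} (h1 : 1/2 ≤ u) (h2 : u ≤ 3/2) : (u-1)^2/9 ≤ phi14 u - 3 := by
  have hu : (0:ℝ) < u := by linarith
  have hs : 0 < Real.sqrt u := Real.sqrt_pos.mpr hu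
  have hs2 : Real.sqrt u ≤ 2 := by
    rw [show (2:ℝ) = Real.sqrt (2^2) by rw [Real.sqrt_sq] <;> norm_num]
    exact Real.sqrt_le_sqrt (by nlinarith)
  have hm : u = Real.sqrt u * Real.sqrt u := (Real.mul_self_sqrt hu.le).symm
  rw [phi14_eq hu, le_div_iff₀ hs]
  have key : (u - 1)^2 = (Real.sqrt u - 1)^2 * (Real.sqrt u + 1)^2 := by nlinarith
  rw [key]
  have hq : (0:ℝ) ≤ (Real.sqrt u - 1)^2 := sq_nonneg _
  nlinarith [sq_nonneg (Real.sqrt u - 1), sq_nonneg (Real.sqrt u + 1)]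
lemma rpow_lin_bound {δ s : ℝ} (hδ0 : 0 < δ) (hδ1 : δ ≤ 1) (hs : -1 < s) :
    |(1+s) ^ δ - 1| ≤ |s| := by
  rcases le_or_gt 0 s with h | h
  · have h1 : (1:ℝ) ≤ (1+s) ^ δ := Real.one_le_rpow (by linarith) hδ0.le
    have h2 : (1+s) ^ δ ≤ (1+s) ^ (1:ℝ) :=
      Real.rpow_le_rpow_of_exponent_le (by linarith) hδ1
    rw [Real.rpow_one] at h2
    rw [abs_of_nonneg (by linarith), abs_of_nonneg h]
    linarith
  · have h0 : (0:ℝ) < 1 + s := by linarith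
    have h1 : (1+s) ^ δ ≤ 1 := Real.rpow_le_one h0.le (by linarith) hδ0.le
    have h2 : (1+s) ^ (1:ℝ) ≤ (1+s) ^ δ :=
      Real.rpow_le_rpow_of_exponent_ge h0 (by linarith) hδ1
    rw [Real.rpow_one] at h2
    rw [abs_of_nonpos (by linarith), abs_of_neg h]
    linarith

lemma meas_aux (ν x c δ : ℝ) :
    Measurable (fun u : ℝ => u ^ ν * Real.exp (-(x * phi14 u) - c * u ^ δ)) := by
  unfold phi14; measurability

/-- bound near zero: for `0 < u ≤ 1`, `u ^ ν * exp (-phi14 u)` is bounded. -/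
lemma bound_near_zero (ν : ℝ) : ∃ C : ℝ, ∀ u : ℝ, 0 < u → u ≤ 1 →
    u ^ ν * Real.exp (-phi14 u) ≤ C := by
  obtain ⟨n, hn⟩ := exists_nat_ge (2 * |ν|)
  set m : ℕ := n + 1 with hm
  have hm0 : (0:ℝ) < m := by positivity
  refine ⟨((m:ℝ)/2) ^ m, fun u hu hu1 => ?_⟩
  have hs : 0 < Real.sqrt u := Real.sqrt_pos.mpr hu
  have hs1 : Real.sqrt u ≤ 1 := Real.sqrt_le_one.mpr hu1
  -- exp(-phi14 u) ≤ exp (-2 * (sqrt u)⁻¹)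
  have e1 : Real.exp (-phi14 u) ≤ Real.exp (-(2 * (Real.sqrt u)⁻¹)) := by
    apply Real.exp_le_exp.mpr
    rw [phi14, rpow_neg_half hu]
    simp only [neg_le_neg_iff]
    linarith
  -- exp (-(2 * (sqrt u)⁻¹)) = (exp (-(2/m * (sqrt u)⁻¹)))^m
  have e2 : Real.exp (-(2 * (Real.sqrt u)⁻¹))
      = (Real.exp (-(2/(m:ℝ) * (Real.sqrt u)⁻¹))) ^ m := by
    rw [← Real.exp_nat_mul]
    congr 1
    field_simp
  -- exp(-r) ≤ 1/r
  have e3 : Real.exp (-(2/(m:ℝ) * (Real.sqrt u)⁻¹)) ≤ (m:ℝ)/2 * Real.sqrt u := by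
    have hr : 0 < 2/(m:ℝ) * (Real.sqrt u)⁻¹ := by positivity
    have := Real.add_one_le_exp (2/(m:ℝ) * (Real.sqrt u)⁻¹)
    have h4 : Real.exp (-(2/(m:ℝ) * (Real.sqrt u)⁻¹))
        = (Real.exp (2/(m:ℝ) * (Real.sqrt u)⁻¹))⁻¹ := by
      rw [← Real.exp_neg]
    rw [h4]
    rw [inv_le_comm₀ (Real.exp_pos _) (by positivity)]
    calc (m/2 * Real.sqrt u)⁻¹ = 2/(m:ℝ) * (Real.sqrt u)⁻¹ := by
          rw [mul_inv]; ring_nf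
      _ ≤ Real.exp (2/(m:ℝ) * (Real.sqrt u)⁻¹) := by linarith
  have e4 : (Real.exp (-(2/(m:ℝ) * (Real.sqrt u)⁻¹))) ^ m ≤ ((m:ℝ)/2) ^ m * (Real.sqrt u) ^ m := by
    rw [← mul_pow]
    exact pow_le_pow_left₀ (Real.exp_pos _).le e3 m
  -- u^ν * sqrt u ^ m ≤ 1·... : u^ν * u^(m/2) = u^(ν + m/2) ≤ 1
  have e5 : u ^ ν * (Real.sqrt u) ^ m ≤ 1 := by
    have : (Real.sqrt u) ^ m = u ^ ((m:ℝ)/2) := by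
      rw [Real.sqrt_eq_rpow, ← Real.rpow_natCast (u ^ ((1:ℝ)/2)) m, ← Real.rpow_mul hu.le]
      congr 1
      ring
    rw [this, ← Real.rpow_add hu]
    apply Real.rpow_le_one hu.le hu1
    have : |ν| ≤ (m:ℝ)/2 := by
      rw [hm]; push_cast; linarith
    have := neg_abs_le ν
    linarith
  have hν : 0 ≤ u ^ ν := Real.rpow_nonneg hu.le ν
  calc u ^ ν * Real.exp (-phi14 u) ≤ u ^ ν * (((m:ℝ)/2) ^ m * (Real.sqrt u) ^ m) := by
        rw [e2] at e1
        exact mul_le_mul_of_nonneg_left (e1.trans e4) hν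
    _ = ((m:ℝ)/2) ^ m * (u ^ ν * (Real.sqrt u) ^ m) := by ring
    _ ≤ ((m:ℝ)/2) ^ m * 1 := by
        apply mul_le_mul_of_nonneg_left e5 (by positivity)
    _ = ((m:ℝ)/2) ^ m := by ring

lemma integrable_base (ν : ℝ) :
    IntegrableOn (fun u : ℝ => u ^ ν * Real.exp (-phi14 u)) (Ioi 0) := by
  have hmeas : Measurable (fun u : ℝ => u ^ ν * Real.exp (-phi14 u)) := by
    have := meas_aux ν 1 0 1
    simpa using this
  rw [← Ioc_union_Ioi_eq_Ioi (zero_le_one' ℝ), integrableOn_union]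
  constructor
  · obtain ⟨C, hC⟩ := bound_near_zero ν
    apply Measure.integrableOn_of_bounded (M := C) (by simp) hmeas.aestronglyMeasurable
    filter_upwards [self_mem_ae_restrict measurableSet_Ioc] with u hu
    rw [Real.norm_eq_abs,
      abs_of_nonneg (mul_nonneg (Real.rpow_nonneg hu.1.le _) (Real.exp_pos _).le)]
    exact hC u hu.1 hu.2
  · obtain ⟨m, hm⟩ := exists_nat_ge ν
    have hG := Real.GammaIntegral_convergent (s := (m:ℝ)+1) (by positivity)
    have hG' : IntegrableOn (fun x : ℝ => Real.exp (-x) * x ^ ((m:ℝ))) (Ioi 1) := by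
      have := hG.mono_set (Ioi_subset_Ioi zero_le_one)
      simpa using this
    apply Integrable.mono hG' hmeas.aestronglyMeasurable.restrict
    filter_upwards [self_mem_ae_restrict measurableSet_Ioi] with u hu
    have hu0 : (0:ℝ) < u := lt_trans zero_lt_one hu
    rw [Real.norm_eq_abs, Real.norm_eq_abs, abs_of_nonneg (by positivity),
      abs_of_nonneg (by positivity)]
    have h1 : u ^ ν ≤ u ^ ((m:ℝ)) := Real.rpow_le_rpow_of_exponent_le hu.le hm
    have h2 : Real.exp (-phi14 u) ≤ Real.exp (-u) := by
      apply Real.exp_le_exp.mpr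
      have : 0 ≤ 2 * u ^ (-(1:ℝ)/2) := by positivity
      rw [phi14]; linarith
    calc u ^ ν * Real.exp (-phi14 u) ≤ u ^ ((m:ℝ)) * Real.exp (-u) := by
          apply mul_le_mul h1 h2 (Real.exp_pos _).le (Real.rpow_nonneg hu0.le _)
      _ = Real.exp (-u) * u ^ ((m:ℝ)) := by ring
open Topology
section chunks
variable {ν b δ : ℝ}

/-- full integrand after rescaling -/
noncomputable def f14 (ν b δ x u : ℝ) : ℝ :=
  u ^ ν * Real.exp (-(x * phi14 u) - b * x ^ δ * u ^ δ)

lemma meas_f14 (ν b δ x : ℝ) : Measurable (f14 ν b δ x) := meas_aux ν x (b * x ^ δ) δ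

lemma f14_nonneg (ν b δ x : ℝ) {u : ℝ} (hu : 0 ≤ u) : 0 ≤ f14 ν b δ x u :=
  mul_nonneg (Real.rpow_nonneg hu _) (Real.exp_pos _).le

lemma f14_le_base (hb : 0 ≤ b) (hδ : 0 < δ) {x u : ℝ} (hx : 1 ≤ x) (hu : 0 < u) :
    f14 ν b δ x u ≤ u ^ ν * Real.exp (-phi14 u) := by
  unfold f14
  apply mul_le_mul_of_nonneg_left _ (Real.rpow_nonneg hu.le _)
  apply Real.exp_le_exp.mpr
  have h3 : (3:ℝ) ≤ phi14 u := by have := phi14_sub_three_nonneg hu; linarith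
  have h0 : 0 ≤ b * x ^ δ * u ^ δ := by
    apply mul_nonneg (mul_nonneg hb (Real.rpow_nonneg (by linarith) _))
      (Real.rpow_nonneg hu.le _)
  nlinarith

lemma f14_tail_le (hb : 0 ≤ b) (hδ : 0 < δ) {x u : ℝ} (hx : 1 ≤ x) (hu : 0 < u)
    (hreg : u ≤ 1/2 ∨ 3/2 ≤ u) :
    f14 ν b δ x u ≤ Real.exp (-((x-1) * (3 + 1/25))) * (u ^ ν * Real.exp (-phi14 u)) := by
  have key : Real.exp (-(x * phi14 u) - b * x ^ δ * u ^ δ)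
      ≤ Real.exp (-((x-1) * (3 + 1/25))) * Real.exp (-phi14 u) := by
    rw [← Real.exp_add]
    apply Real.exp_le_exp.mpr
    have h3 : (3:ℝ) + 1/25 ≤ phi14 u := by have := phi14_tail hu hreg; linarith
    have h0 : 0 ≤ b * x ^ δ * u ^ δ := by
      apply mul_nonneg (mul_nonneg hb (Real.rpow_nonneg (by linarith) _))
        (Real.rpow_nonneg hu.le _)
    nlinarith
  calc f14 ν b δ x u ≤ u ^ ν * (Real.exp (-((x-1) * (3 + 1/25))) * Real.exp (-phi14 u)) :=
        mul_le_mul_of_nonneg_left key (Real.rpow_nonneg hu.le _)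
    _ = Real.exp (-((x-1) * (3 + 1/25))) * (u ^ ν * Real.exp (-phi14 u)) := by ring

lemma integrable_f14 (hb : 0 ≤ b) (hδ : 0 < δ) {x : ℝ} (hx : 1 ≤ x) :
    IntegrableOn (f14 ν b δ x) (Ioi 0) := by
  apply Integrable.mono (integrable_base ν) ((meas_f14 ν b δ x).aestronglyMeasurable.restrict)
  filter_upwards [self_mem_ae_restrict measurableSet_Ioi] with u hu
  have hu0 : (0:ℝ) < u := hu
  rw [Real.norm_eq_abs, Real.norm_eq_abs, abs_of_nonneg (f14_nonneg ν b δ x hu0.le),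
    abs_of_nonneg (mul_nonneg (Real.rpow_nonneg hu0.le _) (Real.exp_pos _).le)]
  exact f14_le_base hb hδ hx hu0

/-- decay lemma -/
lemma decay14 (b : ℝ) {δ η : ℝ} (hδ : δ < 1) (hη : 0 < η) :
    Tendsto (fun x : ℝ => Real.sqrt x * Real.exp (b * x ^ δ - η * x)) atTop (𝓝 0) := by
  have key : Tendsto (fun x : ℝ => Real.log x * (1/2) + (b * x ^ δ - η * x)) atTop atBot := by
    have h1 : ∀ᶠ x : ℝ in atTop, Real.log x * (1/2) + (b * x ^ δ - η * x) ≤ -((η/2) * x) := by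
      have ev1 : ∀ᶠ x : ℝ in atTop, Real.log x * (1/2) ≤ (η/4) * x := by
        filter_upwards [eventually_ge_atTop (max 1 ((4/η)^2))] with x hx
        have hx1 : (1:ℝ) ≤ x := le_trans (le_max_left _ _) hx
        have hx2 : (4/η)^2 ≤ x := le_trans (le_max_right _ _) hx
        have h4 : Real.log x ≤ x ^ ((1:ℝ)/2) / (1/2) := Real.log_le_rpow_div (by linarith) (by norm_num)
        have h5 : x ^ ((1:ℝ)/2) ≤ (η/4) * x := by
          rw [← Real.sqrt_eq_rpow]
          have h6 : 4/η ≤ Real.sqrt x := by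
            rw [show (4:ℝ)/η = Real.sqrt ((4/η)^2) by rw [Real.sqrt_sq (by positivity)]]
            exact Real.sqrt_le_sqrt hx2
          have h7 : Real.sqrt x * Real.sqrt x = x := Real.mul_self_sqrt (by linarith)
          calc Real.sqrt x = 1 * Real.sqrt x := (one_mul _).symm
            _ ≤ ((η/4) * Real.sqrt x) * Real.sqrt x := by
                apply mul_le_mul_of_nonneg_right _ (Real.sqrt_nonneg x)
                rw [show (1:ℝ) = (η/4) * (4/η) by field_simp]
                exact mul_le_mul_of_nonneg_left h6 (by positivity)
            _ = (η/4) * x := by rw [mul_assoc, h7]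
        linarith
      have ev2 : ∀ᶠ x : ℝ in atTop, b * x ^ δ ≤ (η/4) * x := by
        have h8 : Tendsto (fun x : ℝ => x ^ (1 - δ)) atTop atTop := tendsto_rpow_atTop (by linarith)
        filter_upwards [h8.eventually_ge_atTop (4 * (|b|+1) / η), eventually_ge_atTop 1] with x h9 hx1
        have hx0 : (0:ℝ) < x := by linarith
        have h12 : x ^ δ * x ^ (1 - δ) = x := by
          rw [← Real.rpow_add hx0]; norm_num
        have h13 : (|b|+1) * x ^ δ * (4 * (|b|+1) / η) ≤ (|b|+1) * x ^ δ * x ^ (1-δ) := by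
          apply mul_le_mul_of_nonneg_left h9
          positivity
        calc b * x ^ δ ≤ (|b|+1) * x ^ δ := by
              apply mul_le_mul_of_nonneg_right _ (Real.rpow_nonneg hx0.le _)
              have := le_abs_self b; linarith
          _ = (η/4) * (x ^ δ * (4 * (|b|+1) / η)) := by
              field_simp
          _ ≤ (η/4) * (x ^ δ * x ^ (1-δ)) := by
              apply mul_le_mul_of_nonneg_left _ (by positivity)
              exact mul_le_mul_of_nonneg_left h9 (Real.rpow_nonneg hx0.le _)
          _ = (η/4) * x := by rw [h12]
      filter_upwards [ev1, ev2] with x h1 h2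
      linarith
    have h2' : Tendsto (fun x : ℝ => (η/2) * x) atTop atTop :=
      Tendsto.const_mul_atTop (by positivity) tendsto_id
    exact tendsto_atBot_mono' atTop h1 (tendsto_neg_atBot_iff.mpr h2')
  apply Tendsto.congr' _ (Real.tendsto_exp_atBot.comp key)
  filter_upwards [eventually_gt_atTop 0] with x hx
  show Real.exp (Real.log x * (1/2) + (b * x ^ δ - η * x)) = _
  rw [Real.exp_add, Real.sqrt_eq_rpow, Real.rpow_def_of_pos hx (1/2)]
end chunks
section tail
open Topology
variable {ν b δ : ℝ}

lemma integral_f14_nonneg (ν b δ x : ℝ) {s : Set ℝ} (hs : MeasurableSet s) (h : s ⊆ Ioi 0) :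
    0 ≤ ∫ u in s, f14 ν b δ x u :=
  setIntegral_nonneg hs (fun u hu => f14_nonneg ν b δ x (le_of_lt (h hu)))

lemma tail_piece_le (hb : 0 ≤ b) (hδ : 0 < δ) {x : ℝ} (hx : 1 ≤ x) {s : Set ℝ}
    (hs : MeasurableSet s) (hsub : s ⊆ Ioi 0) (hreg : ∀ u ∈ s, u ≤ 1/2 ∨ 3/2 ≤ u) :
    (∫ u in s, f14 ν b δ x u)
      ≤ Real.exp (-((x-1) * (3 + 1/25))) * ∫ u in Ioi 0, u ^ ν * Real.exp (-phi14 u) := by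
  have hbase := integrable_base ν
  calc (∫ u in s, f14 ν b δ x u)
      ≤ ∫ u in s, Real.exp (-((x-1) * (3 + 1/25))) * (u ^ ν * Real.exp (-phi14 u)) := by
        apply setIntegral_mono_on ((integrable_f14 hb hδ hx).mono_set hsub)
          ((hbase.mono_set hsub).const_mul _) hs
        intro u hu
        exact f14_tail_le hb hδ hx (hsub hu) (hreg u hu)
    _ = Real.exp (-((x-1) * (3 + 1/25))) * ∫ u in s, u ^ ν * Real.exp (-phi14 u) := by
        rw [integral_const_mul]
    _ ≤ Real.exp (-((x-1) * (3 + 1/25))) * ∫ u in Ioi 0, u ^ ν * Real.exp (-phi14 u) := by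
        apply mul_le_mul_of_nonneg_left _ (Real.exp_pos _).le
        apply setIntegral_mono_set hbase
        · filter_upwards [self_mem_ae_restrict measurableSet_Ioi] with u hu
          exact mul_nonneg (Real.rpow_nonneg (le_of_lt hu) _) (Real.exp_pos _).le
        · exact hsub.eventuallyLE

lemma tail14 (hb : 0 ≤ b) (hδ0 : 0 < δ) (hδ1 : δ < 1) :
    Tendsto (fun x : ℝ => Real.sqrt x * Real.exp (3*x + b*x^δ) *
      ((∫ u in Ioc 0 (1/2), f14 ν b δ x u) + ∫ u in Ioi (3/2), f14 ν b δ x u))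
      atTop (𝓝 0) := by
  set K := ∫ u in Ioi (0:ℝ), u ^ ν * Real.exp (-phi14 u) with hK
  have hKnn : 0 ≤ K := by
    apply setIntegral_nonneg measurableSet_Ioi
    intro u hu
    exact mul_nonneg (Real.rpow_nonneg (le_of_lt hu) _) (Real.exp_pos _).le
  apply squeeze_zero' (t₀ := atTop)
  · filter_upwards [eventually_ge_atTop (0:ℝ)] with x hx
    apply mul_nonneg (mul_nonneg (Real.sqrt_nonneg x) (Real.exp_pos _).le)
    have h1 : (Ioc (0:ℝ) (1/2)) ⊆ Ioi 0 := fun u hu => hu.1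
    have h2 : (Ioi (3/2:ℝ)) ⊆ Ioi 0 := Ioi_subset_Ioi (by norm_num)
    exact add_nonneg (integral_f14_nonneg ν b δ x measurableSet_Ioc h1)
      (integral_f14_nonneg ν b δ x measurableSet_Ioi h2)
  · show ∀ᶠ x in atTop, _ ≤ (fun x : ℝ => (2 * K * Real.exp (76/25)) *
      (Real.sqrt x * Real.exp (b * x ^ δ - (1/25) * x))) x
    filter_upwards [eventually_ge_atTop (1:ℝ)] with x hx
    have e1 := tail_piece_le (ν := ν) hb hδ0 hx (s := Ioc 0 (1/2)) measurableSet_Ioc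
      (fun u hu => hu.1) (fun u hu => Or.inl hu.2)
    have e2 := tail_piece_le (ν := ν) hb hδ0 hx (s := Ioi (3/2)) measurableSet_Ioi
      (Ioi_subset_Ioi (by norm_num)) (fun u hu => Or.inr (le_of_lt hu))
    have hs : 0 ≤ Real.sqrt x * Real.exp (3*x + b*x^δ) :=
      mul_nonneg (Real.sqrt_nonneg x) (Real.exp_pos _).le
    calc Real.sqrt x * Real.exp (3*x + b*x^δ) *
        ((∫ u in Ioc 0 (1/2), f14 ν b δ x u) + ∫ u in Ioi (3/2), f14 ν b δ x u)
        ≤ Real.sqrt x * Real.exp (3*x + b*x^δ) * (2 * (Real.exp (-((x-1) * (3 + 1/25))) * K)) := by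
          apply mul_le_mul_of_nonneg_left _ hs
          linarith
      _ = (2 * K * Real.exp (76/25)) * (Real.sqrt x * Real.exp (b * x ^ δ - (1/25) * x)) := by
          have hE : Real.exp (3*x + b*x^δ) * Real.exp (-((x-1) * (3 + 1/25)))
              = Real.exp (76/25) * Real.exp (b * x ^ δ - (1/25) * x) := by
            rw [← Real.exp_add, ← Real.exp_add]; congr 1; ring
          calc Real.sqrt x * Real.exp (3*x + b*x^δ) * (2 * (Real.exp (-((x-1) * (3 + 1/25))) * K))
              = (2 * K) * Real.sqrt x * (Real.exp (3*x + b*x^δ) * Real.exp (-((x-1) * (3 + 1/25)))) := by ring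
            _ = (2 * K) * Real.sqrt x * (Real.exp (76/25) * Real.exp (b * x ^ δ - (1/25) * x)) := by rw [hE]
            _ = (2 * K * Real.exp (76/25)) * (Real.sqrt x * Real.exp (b * x ^ δ - (1/25) * x)) := by ring
  · have := (decay14 (δ := δ) (η := 1/25) b hδ1 (by norm_num)).const_mul
      (2 * K * Real.exp (76/25))
    simpa using this
end tail
section central
open Topology
variable {ν b δ : ℝ}

lemma sqrt_tendsto_atTop : Tendsto Real.sqrt atTop atTop :=
  Tendsto.congr (fun x => (Real.sqrt_eq_rpow x).symm) (tendsto_rpow_atTop (by norm_num))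

/-- rescaled central integrand, in product form -/
noncomputable def psi14 (ν b δ x t : ℝ) : ℝ :=
  (1 + t / Real.sqrt x) ^ ν *
    Real.exp (-(x * (phi14 (1 + t / Real.sqrt x) - 3))
      - b * x ^ δ * ((1 + t / Real.sqrt x) ^ δ - 1))

lemma psi14_eq (ν b δ x t : ℝ) :
    Real.exp (3 * x + b * x ^ δ) * f14 ν b δ x (1 + t / Real.sqrt x) = psi14 ν b δ x t := by
  unfold psi14 f14
  rw [show Real.exp (3 * x + b * x ^ δ) * ((1 + t / Real.sqrt x) ^ ν *
      Real.exp (-(x * phi14 (1 + t / Real.sqrt x)) - b * x ^ δ * (1 + t / Real.sqrt x) ^ δ))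
    = (1 + t / Real.sqrt x) ^ ν * (Real.exp (3 * x + b * x ^ δ) *
      Real.exp (-(x * phi14 (1 + t / Real.sqrt x)) - b * x ^ δ * (1 + t / Real.sqrt x) ^ δ)) from by ring,
    ← Real.exp_add]
  congr 2
  ring

lemma psi14_nonneg (ν b δ x t : ℝ) (h : 0 ≤ 1 + t / Real.sqrt x) : 0 ≤ psi14 ν b δ x t :=
  mul_nonneg (Real.rpow_nonneg h _) (Real.exp_pos _).le

/-- substitution: central integral over `Ioc (1/2) (3/2)` -/
lemma central_subst (ν b δ : ℝ) {x : ℝ} (hx : 0 < x) :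
    Real.exp (3 * x + b * x ^ δ) * (Real.sqrt x * ∫ u in Ioc (1/2) (3/2), f14 ν b δ x u)
      = ∫ t, Set.indicator (Ioc (-(Real.sqrt x)/2) (Real.sqrt x/2)) (psi14 ν b δ x) t := by
  have hs : 0 < Real.sqrt x := Real.sqrt_pos.mpr hx
  have key : (Real.sqrt x)⁻¹ • ∫ t in (-(Real.sqrt x)/2)..(Real.sqrt x/2),
      f14 ν b δ x ((Real.sqrt x)⁻¹ * t + 1)
      = ∫ u in (1/2 : ℝ)..(3/2 : ℝ), f14 ν b δ x u := by
    rw [intervalIntegral.integral_comp_mul_add (f14 ν b δ x) (by positivity : (Real.sqrt x)⁻¹ ≠ 0) 1]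
    rw [smul_smul]
    rw [show (Real.sqrt x)⁻¹ * (-(Real.sqrt x)/2) + 1 = 1/2 by field_simp; ring,
      show (Real.sqrt x)⁻¹ * (Real.sqrt x/2) + 1 = 3/2 by field_simp; ring]
    simp only [smul_eq_mul, inv_inv]
    rw [inv_mul_cancel₀ (ne_of_gt hs), one_mul]
  have h2 : ∫ u in Ioc (1/2 : ℝ) (3/2), f14 ν b δ x u
      = (Real.sqrt x)⁻¹ * ∫ t in Ioc (-(Real.sqrt x)/2) (Real.sqrt x/2),
          f14 ν b δ x ((Real.sqrt x)⁻¹ * t + 1) := by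
    rw [← intervalIntegral.integral_of_le (by norm_num : (1/2:ℝ) ≤ 3/2), ← key,
      intervalIntegral.integral_of_le (by linarith : -(Real.sqrt x)/2 ≤ Real.sqrt x/2)]
    simp [smul_eq_mul]
  rw [h2, integral_indicator measurableSet_Ioc]
  rw [show Real.sqrt x * ((Real.sqrt x)⁻¹ * ∫ t in Ioc (-(Real.sqrt x)/2) (Real.sqrt x/2),
      f14 ν b δ x ((Real.sqrt x)⁻¹ * t + 1))
    = ∫ t in Ioc (-(Real.sqrt x)/2) (Real.sqrt x/2), f14 ν b δ x ((Real.sqrt x)⁻¹ * t + 1)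
    from by field_simp]
  rw [← integral_const_mul]
  apply setIntegral_congr_fun measurableSet_Ioc
  intro t _
  rw [← psi14_eq]
  congr 2
  field_simp
  ring
section dct
open Topology
variable {ν b δ : ℝ}

lemma rpow_abs_bound {u : ℝ} (ν : ℝ) (h1 : 1/2 ≤ u) (h2 : u ≤ 2) : u ^ ν ≤ 2 ^ |ν| := by
  rcases le_or_gt 0 ν with hν | hν
  · calc u ^ ν ≤ 2 ^ ν := Real.rpow_le_rpow (by linarith) h2 hν
      _ ≤ 2 ^ |ν| := Real.rpow_le_rpow_of_exponent_le one_le_two (le_abs_self ν)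
  · calc u ^ ν ≤ (1/2 : ℝ) ^ ν := Real.rpow_le_rpow_of_nonpos (by norm_num) h1 hν.le
      _ = 2 ^ (-ν) := by
          rw [show (1/2 : ℝ) = 2⁻¹ by norm_num, Real.inv_rpow (by norm_num),
            ← Real.rpow_neg (by norm_num)]
      _ = 2 ^ |ν| := by rw [abs_of_neg hν]

lemma mem_ioc_s {x t : ℝ} (hx0 : 0 < x) (ht : t ∈ Ioc (-(Real.sqrt x)/2) (Real.sqrt x/2)) :
    -(1/2 : ℝ) < t / Real.sqrt x ∧ t / Real.sqrt x ≤ 1/2 := by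
  have hs : 0 < Real.sqrt x := Real.sqrt_pos.mpr hx0
  constructor
  · have h := ht.1
    rw [show -(1/2 : ℝ) = (-(Real.sqrt x)/2) / Real.sqrt x by field_simp]
    gcongr
  · have h := ht.2
    rw [show (1/2 : ℝ) = (Real.sqrt x/2) / Real.sqrt x by field_simp]
    gcongr

lemma psi14_bound (hb : 0 ≤ b) (hδ0 : 0 < δ) (hδ1 : δ < 1/2) :
    ∀ᶠ x : ℝ in atTop, ∀ t : ℝ, t ∈ Ioc (-(Real.sqrt x)/2) (Real.sqrt x/2) →
      psi14 ν b δ x t ≤ (2:ℝ) ^ |ν| * Real.exp 5 * Real.exp (-(1/18) * t^2) := by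
  have hev : ∀ᶠ x : ℝ in atTop, b * (x ^ δ / x ^ (1/2 : ℝ)) ≤ 1 := by
    have h := tendsto_rpow_neg_atTop (y := 1/2 - δ) (by linarith)
    have h2 : Tendsto (fun x : ℝ => b * x ^ (δ - 1/2)) atTop (𝓝 (b * 0)) := by
      apply Tendsto.const_mul
      convert h using 3
      ring_nf
    rw [mul_zero] at h2
    filter_upwards [h2.eventually (eventually_le_nhds (by norm_num : (0:ℝ) < 1)),
      eventually_gt_atTop (0:ℝ)] with x hx hx0
    rwa [Real.rpow_sub hx0] at hx
  filter_upwards [hev, eventually_ge_atTop (1:ℝ)] with x hbx hx1 t ht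
  have hx0 : (0:ℝ) < x := by linarith
  have hs : 0 < Real.sqrt x := Real.sqrt_pos.mpr hx0
  obtain ⟨hs1, hs2⟩ := mem_ioc_s hx0 ht
  set s : ℝ := t / Real.sqrt x with hsdef
  have hu1 : 1/2 ≤ 1 + s := by linarith
  have hu2 : 1 + s ≤ 3/2 := by linarith
  have hu0 : (0:ℝ) < 1 + s := by linarith
  have hxs : x * s^2 = t^2 := by
    rw [hsdef, div_pow, Real.sq_sqrt hx0.le]
    field_simp
  have part1 : t^2/9 ≤ x * (phi14 (1 + s) - 3) := by
    have := phi14_quad (u := 1 + s) hu1 hu2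
    have h9 : x * (((1+s)-1)^2/9) ≤ x * (phi14 (1+s) - 3) :=
      mul_le_mul_of_nonneg_left this hx0.le
    calc t^2/9 = x * (((1+s)-1)^2/9) := by
          rw [show ((1+s)-1) = s by ring]; rw [← hxs]; ring
      _ ≤ x * (phi14 (1+s) - 3) := h9
  have part2 : -(b * x ^ δ * ((1 + s) ^ δ - 1)) ≤ |t| := by
    have hlin := rpow_lin_bound hδ0 (by linarith) (by linarith : (-1:ℝ) < s)
    have habs : |s| = |t| / Real.sqrt x := by rw [hsdef, abs_div, abs_of_pos hs]
    have hxp : (0:ℝ) ≤ x ^ δ := Real.rpow_nonneg hx0.le _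
    calc -(b * x ^ δ * ((1 + s) ^ δ - 1)) ≤ |b * x ^ δ * ((1 + s) ^ δ - 1)| := neg_le_abs _
      _ = b * x ^ δ * |(1 + s) ^ δ - 1| := by
          rw [abs_mul, abs_of_nonneg (mul_nonneg hb hxp)]
      _ ≤ b * x ^ δ * |s| := mul_le_mul_of_nonneg_left hlin (mul_nonneg hb hxp)
      _ = (b * (x ^ δ / x ^ (1/2:ℝ))) * |t| := by
          rw [habs, Real.sqrt_eq_rpow]; ring
      _ ≤ 1 * |t| := mul_le_mul_of_nonneg_right hbx (abs_nonneg t)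
      _ = |t| := one_mul _
  have hexp : Real.exp (-(x * (phi14 (1 + s) - 3)) - b * x ^ δ * ((1 + s) ^ δ - 1))
      ≤ Real.exp 5 * Real.exp (-(1/18) * t^2) := by
    rw [← Real.exp_add]
    apply Real.exp_le_exp.mpr
    have habs2 : |t|^2 = t^2 := sq_abs t
    nlinarith [sq_nonneg (|t| - 9)]
  have hr : (1 + s) ^ ν ≤ 2 ^ |ν| := rpow_abs_bound ν hu1 (by linarith)
  calc psi14 ν b δ x t = (1 + s) ^ ν *
        Real.exp (-(x * (phi14 (1 + s) - 3)) - b * x ^ δ * ((1 + s) ^ δ - 1)) := rfl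
    _ ≤ 2 ^ |ν| * (Real.exp 5 * Real.exp (-(1/18) * t^2)) := by
        apply mul_le_mul hr hexp (Real.exp_pos _).le (by positivity)
    _ = (2:ℝ) ^ |ν| * Real.exp 5 * Real.exp (-(1/18) * t^2) := by ring

lemma psi14_tendsto (hb : 0 ≤ b) (hδ0 : 0 < δ) (hδ1 : δ < 1/2) (t : ℝ) :
    Tendsto (fun x : ℝ => psi14 ν b δ x t) atTop (𝓝 (Real.exp (-(3/4 * t^2)))) := by
  have h0 : Tendsto (fun x : ℝ => t / Real.sqrt x) atTop (𝓝 0) := by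
    have := sqrt_tendsto_atTop.inv_tendsto_atTop.const_mul t
    rw [mul_zero] at this
    apply this.congr
    intro x; rw [div_eq_mul_inv]; rfl
  have hu : Tendsto (fun x : ℝ => 1 + t / Real.sqrt x) atTop (𝓝 1) := by
    have := tendsto_const_nhds (x := (1:ℝ)) (f := atTop (α := ℝ)) |>.add h0
    simpa using this
  -- (ii) rpow factor
  have hii : Tendsto (fun x : ℝ => (1 + t / Real.sqrt x) ^ ν) atTop (𝓝 1) := by
    have hc : ContinuousAt (fun y : ℝ => y ^ ν) 1 :=
      Real.continuousAt_rpow_const 1 ν (Or.inl one_ne_zero)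
    have := hc.tendsto.comp hu
    simpa [Function.comp_def] using this
  -- (iii) quadratic part
  have hW : Tendsto (fun x : ℝ => Real.sqrt (1 + t / Real.sqrt x)) atTop (𝓝 1) := by
    have := (Real.continuous_sqrt.continuousAt (x := (1:ℝ))).tendsto.comp hu
    simpa [Function.comp_def] using this
  have hA : Tendsto (fun x : ℝ => t^2 * ((Real.sqrt (1 + t / Real.sqrt x) + 2) /
      (Real.sqrt (1 + t / Real.sqrt x) * (Real.sqrt (1 + t / Real.sqrt x) + 1)^2)))
      atTop (𝓝 (3/4 * t^2)) := by
    have hden : Tendsto (fun x : ℝ => Real.sqrt (1 + t / Real.sqrt x) *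
        (Real.sqrt (1 + t / Real.sqrt x) + 1)^2) atTop (𝓝 4) := by
      have h := hW.mul ((hW.add (tendsto_const_nhds (x := (1:ℝ)))).pow 2)
      norm_num at h
      exact h
    have hnum : Tendsto (fun x : ℝ => Real.sqrt (1 + t / Real.sqrt x) + 2) atTop (𝓝 3) := by
      have h := hW.add (tendsto_const_nhds (x := (2:ℝ)))
      norm_num at h
      exact h
    have h34 := (hnum.div hden (by norm_num)).const_mul (t^2)
    simp only [Pi.div_apply] at h34
    convert h34 using 2
    ring
  have hiii : Tendsto (fun x : ℝ => x * (phi14 (1 + t / Real.sqrt x) - 3)) atTop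
      (𝓝 (3/4 * t^2)) := by
    apply hA.congr'
    filter_upwards [eventually_ge_atTop (1:ℝ), sqrt_tendsto_atTop.eventually_gt_atTop (2 * |t|)]
      with x hx1 hx2
    have hx0 : (0:ℝ) < x := by linarith
    have hs : 0 < Real.sqrt x := Real.sqrt_pos.mpr hx0
    set s : ℝ := t / Real.sqrt x with hsdef
    have hsabs : |s| < 1/2 := by
      rw [hsdef, abs_div, abs_of_pos hs, div_lt_iff₀ hs]
      linarith
    have hu0 : (0:ℝ) < 1 + s := by
      have := abs_lt.mp hsabs; linarith
    have hw : 0 < Real.sqrt (1 + s) := Real.sqrt_pos.mpr hu0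
    have hmul : Real.sqrt (1+s) * Real.sqrt (1+s) = 1 + s := Real.mul_self_sqrt hu0.le
    have hxs : x * s^2 = t^2 := by
      rw [hsdef, div_pow, Real.sq_sqrt hx0.le]; field_simp
    rw [phi14_eq hu0]
    rw [← hxs]
    have e1 : s^2 = (Real.sqrt (1+s) - 1)^2 * (Real.sqrt (1+s) + 1)^2 := by nlinarith
    rw [e1]
    field_simp
  -- (iv) depletion part
  have hiv : Tendsto (fun x : ℝ => b * x ^ δ * ((1 + t / Real.sqrt x) ^ δ - 1)) atTop (𝓝 0) := by
    apply squeeze_zero_norm' (a := fun x : ℝ => (|b| * |t|) * x ^ (δ - 1/2))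
    · filter_upwards [eventually_ge_atTop (1:ℝ), sqrt_tendsto_atTop.eventually_gt_atTop (2 * |t|)]
        with x hx1 hx2
      have hx0 : (0:ℝ) < x := by linarith
      have hs : 0 < Real.sqrt x := Real.sqrt_pos.mpr hx0
      set s : ℝ := t / Real.sqrt x with hsdef
      have hsabs : |s| < 1/2 := by
        rw [hsdef, abs_div, abs_of_pos hs, div_lt_iff₀ hs]
        linarith
      have hs1 : (-1:ℝ) < s := by have := abs_lt.mp hsabs; linarith
      have hlin := rpow_lin_bound hδ0 (by linarith) hs1
      have hxp : (0:ℝ) ≤ x ^ δ := Real.rpow_nonneg hx0.le _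
      have habs : |s| = |t| / Real.sqrt x := by rw [hsdef, abs_div, abs_of_pos hs]
      calc ‖b * x ^ δ * ((1 + s) ^ δ - 1)‖ = |b| * x ^ δ * |(1 + s) ^ δ - 1| := by
            rw [Real.norm_eq_abs, abs_mul, abs_mul, abs_of_nonneg hxp]
        _ ≤ |b| * x ^ δ * |s| :=
            mul_le_mul_of_nonneg_left hlin (mul_nonneg (abs_nonneg b) hxp)
        _ = (|b| * |t|) * (x ^ δ / x ^ (1/2 : ℝ)) := by
            rw [habs, Real.sqrt_eq_rpow]; ring
        _ = (|b| * |t|) * x ^ (δ - 1/2) := by rw [Real.rpow_sub hx0]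
    · have h := tendsto_rpow_neg_atTop (y := 1/2 - δ) (by linarith)
      have h2 := h.const_mul (|b| * |t|)
      rw [mul_zero] at h2
      apply h2.congr
      intro x
      congr 2
      ring
  have hexp : Tendsto (fun x : ℝ => Real.exp (-(x * (phi14 (1 + t / Real.sqrt x) - 3))
      - b * x ^ δ * ((1 + t / Real.sqrt x) ^ δ - 1))) atTop (𝓝 (Real.exp (-(3/4 * t^2)))) := by
    have := Real.continuous_exp.continuousAt.tendsto.comp (hiii.neg.sub hiv)
    simpa [Function.comp_def] using this
  have := hii.mul hexp
  rw [one_mul] at this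
  exact this
end dct
section assemble
open Topology
variable {ν b δ : ℝ}

set_option maxHeartbeats 1000000 in
lemma psi14_measurable (ν b δ x : ℝ) : Measurable (psi14 ν b δ x) := by
  unfold psi14 phi14
  measurability

lemma central14 (hb : 0 ≤ b) (hδ0 : 0 < δ) (hδ1 : δ < 1/2) :
    Tendsto (fun x : ℝ => Real.exp (3*x + b*x^δ) *
        (Real.sqrt x * ∫ u in Ioc (1/2) (3/2), f14 ν b δ x u))
      atTop (𝓝 (Real.sqrt (Real.pi / (3/4)))) := by
  have hgauss : (∫ t : ℝ, Real.exp (-(3/4 * t^2))) = Real.sqrt (Real.pi / (3/4)) := by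
    rw [← integral_gaussian (3/4)]
    congr 1
    ext t
    congr 1
    ring
  have hlim : Tendsto (fun x : ℝ => ∫ t, Set.indicator
      (Ioc (-(Real.sqrt x)/2) (Real.sqrt x/2)) (psi14 ν b δ x) t)
      atTop (𝓝 (∫ t : ℝ, Real.exp (-(3/4 * t^2)))) := by
    apply tendsto_integral_filter_of_dominated_convergence
      (bound := fun t => (2:ℝ)^|ν| * Real.exp 5 * Real.exp (-(1/18) * t^2))
      (f := fun t : ℝ => Real.exp (-(3/4 * t^2)))
    · apply Eventually.of_forall
      intro x
      exact ((psi14_measurable ν b δ x).indicator measurableSet_Ioc).aestronglyMeasurable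
    · filter_upwards [psi14_bound hb hδ0 hδ1, eventually_ge_atTop (1:ℝ)] with x hx hx1
      apply Eventually.of_forall
      intro t
      by_cases ht : t ∈ Ioc (-(Real.sqrt x)/2) (Real.sqrt x/2)
      · rw [Set.indicator_of_mem ht, Real.norm_eq_abs, abs_of_nonneg]
        · exact hx t ht
        · have hx0 : (0:ℝ) < x := by linarith
          obtain ⟨h1, _⟩ := mem_ioc_s hx0 ht
          exact psi14_nonneg ν b δ x t (by linarith)
      · rw [Set.indicator_of_notMem ht, norm_zero]
        positivity
    · exact (integrable_exp_neg_mul_sq (b := 1/18) (by norm_num)).const_mul _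
    · apply Eventually.of_forall
      intro t
      refine Tendsto.congr' ?_ (psi14_tendsto (ν := ν) hb hδ0 hδ1 t)
      filter_upwards [sqrt_tendsto_atTop.eventually_gt_atTop (2 * |t|)] with x hx
      have ht : t ∈ Ioc (-(Real.sqrt x)/2) (Real.sqrt x/2) := by
        have h := abs_lt.mp (show |t| < Real.sqrt x / 2 by nlinarith [abs_nonneg t])
        exact ⟨by linarith [h.1], by linarith [h.2]⟩
      rw [Set.indicator_of_mem ht]
  rw [← hgauss]
  apply Tendsto.congr' _ hlim
  filter_upwards [eventually_gt_atTop (0:ℝ)] with x hx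
  exact (central_subst ν b δ hx).symm

lemma split14 (hb : 0 ≤ b) (hδ0 : 0 < δ) {x : ℝ} (hx : 1 ≤ x) :
    ∫ u in Ioi 0, f14 ν b δ x u
      = ((∫ u in Ioc 0 (1/2), f14 ν b δ x u) + ∫ u in Ioi (3/2), f14 ν b δ x u)
        + ∫ u in Ioc (1/2) (3/2), f14 ν b δ x u := by
  have hint := integrable_f14 (ν := ν) hb hδ0 hx
  have h1 : Ioi (0:ℝ) = Ioc 0 (1/2) ∪ Ioi (1/2) :=
    (Ioc_union_Ioi_eq_Ioi (by norm_num)).symm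
  have h2 : Ioi (1/2 : ℝ) = Ioc (1/2) (3/2) ∪ Ioi (3/2) :=
    (Ioc_union_Ioi_eq_Ioi (by norm_num)).symm
  rw [h1, setIntegral_union (Ioc_disjoint_Ioi le_rfl) measurableSet_Ioi
    (hint.mono_set (by rw [h1]; exact subset_union_left))
    (hint.mono_set (by rw [h1]; exact subset_union_right)),
    h2, setIntegral_union (Ioc_disjoint_Ioi le_rfl) measurableSet_Ioi
    (hint.mono_set (by rw [h1, h2]; exact subset_union_of_subset_right subset_union_left _))
    (hint.mono_set (by rw [h1, h2]; exact subset_union_of_subset_right subset_union_right _))]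
  ring

lemma full14 (hb : 0 ≤ b) (hδ0 : 0 < δ) (hδ1 : δ < 1/2) :
    Tendsto (fun x : ℝ => Real.sqrt x * Real.exp (3*x + b*x^δ) * ∫ u in Ioi 0, f14 ν b δ x u)
      atTop (𝓝 (Real.sqrt (Real.pi / (3/4)))) := by
  have h := (tail14 (ν := ν) hb hδ0 (by linarith)).add (central14 (ν := ν) hb hδ0 hδ1)
  rw [zero_add] at h
  apply Tendsto.congr' _ h
  filter_upwards [eventually_ge_atTop (1:ℝ)] with x hx
  rw [split14 hb hδ0 hx]
  ring

end assemble
open Topology in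
theorem stmt14 (ν b δ : ℝ) (hb : 0 < b) (hδ₀ : 0 < δ) (hδ₁ : δ < 1/2) :
    (fun z : ℝ => ∫ y in Set.Ioi (0:ℝ), y ^ ν * Real.exp (-y - b * y ^ δ - z * y ^ (-(1:ℝ)/2)))
      ~[atTop]
    (fun z : ℝ => 2 * (Real.pi / 3) ^ ((1:ℝ)/2) * (z^2/4) ^ ((2*ν+1)/6) *
        Real.exp (-3 * (z^2/4) ^ ((1:ℝ)/3) - b * (z^2/4) ^ (δ/3))) := by
  have hπ : 0 < Real.pi := Real.pi_pos
  set c₀ : ℝ := Real.sqrt (Real.pi / (3/4)) with hc₀def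
  have hc₀ : 0 < c₀ := Real.sqrt_pos.mpr (by positivity)
  have hcc : c₀ = 2 * (Real.pi / 3) ^ ((1:ℝ)/2) := by
    rw [hc₀def, ← Real.sqrt_eq_rpow, show Real.pi / (3/4) = 4 * (Real.pi/3) by ring,
      Real.sqrt_mul (by norm_num) _, show (4:ℝ) = 2^2 by norm_num,
      Real.sqrt_sq (by norm_num : (0:ℝ) ≤ 2)]
  rw [Asymptotics.isEquivalent_iff_tendsto_one]
  swap
  · filter_upwards [eventually_gt_atTop (0:ℝ)] with z hz
    have h1 : (0:ℝ) < z^2/4 := by positivity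
    positivity
  have hx : Tendsto (fun z : ℝ => (z^2/4) ^ ((1:ℝ)/3)) atTop atTop := by
    apply (tendsto_rpow_atTop (by norm_num : (0:ℝ) < 1/3)).comp
    exact (tendsto_pow_atTop (two_ne_zero)).atTop_div_const (by norm_num)
  have hF := (full14 (ν := ν) hb.le hδ₀ hδ₁).comp hx
  have hFdiv := hF.div_const c₀
  rw [← hc₀def, div_self hc₀.ne'] at hFdiv
  apply Tendsto.congr' _ hFdiv
  filter_upwards [eventually_gt_atTop (0:ℝ)] with z hz
  simp only [Function.comp_apply, Pi.div_apply]
  set X : ℝ := (z^2/4) ^ ((1:ℝ)/3) with hXdef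
  have hq : (0:ℝ) < z^2/4 := by positivity
  have hX0 : (0:ℝ) < X := Real.rpow_pos_of_pos hq _
  have ha : X ^ ((3:ℝ)/2) = z/2 := by
    rw [hXdef, ← Real.rpow_mul hq.le]
    norm_num
    rw [← Real.sqrt_eq_rpow, show z^2/4 = (z/2)^2 by ring, Real.sqrt_sq (by linarith)]
  -- substitution identity
  have hptw : ∀ u ∈ Ioi (0:ℝ),
      (X*u) ^ ν * Real.exp (-(X*u) - b * (X*u) ^ δ - z * (X*u) ^ (-(1:ℝ)/2))
        = X ^ ν * f14 ν b δ X u := by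
    intro u hu
    have hu0 : (0:ℝ) < u := hu
    have e1 : (X*u) ^ ν = X ^ ν * u ^ ν := Real.mul_rpow hX0.le hu0.le
    have e2 : (X*u) ^ δ = X ^ δ * u ^ δ := Real.mul_rpow hX0.le hu0.le
    have e3 : (X*u) ^ (-(1:ℝ)/2) = X ^ (-(1:ℝ)/2) * u ^ (-(1:ℝ)/2) :=
      Real.mul_rpow hX0.le hu0.le
    have e4 : z * X ^ (-(1:ℝ)/2) = 2 * X := by
      rw [show z = 2 * (z/2) by ring, ← ha, mul_assoc, ← Real.rpow_add hX0]
      norm_num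
    unfold f14 phi14
    rw [e1, e2, e3]
    rw [show -(X*u) - b * (X ^ δ * u ^ δ) - z * (X ^ (-(1:ℝ)/2) * u ^ (-(1:ℝ)/2))
        = -(X*u) - b * (X ^ δ * u ^ δ) - (z * X ^ (-(1:ℝ)/2)) * u ^ (-(1:ℝ)/2) by ring, e4]
    rw [show X ^ ν * u ^ ν * Real.exp (-(X * u) - b * (X ^ δ * u ^ δ) - 2 * X * u ^ (-(1:ℝ)/2))
        = X ^ ν * (u ^ ν * Real.exp (-(X * u) - b * (X ^ δ * u ^ δ) - 2 * X * u ^ (-(1:ℝ)/2)))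
        by ring]
    congr 2
    ring
  have hsub : (∫ y in Ioi (0:ℝ), y ^ ν * Real.exp (-y - b * y ^ δ - z * y ^ (-(1:ℝ)/2)))
      = X ^ (ν+1) * ∫ u in Ioi (0:ℝ), f14 ν b δ X u := by
    have h := integral_comp_mul_left_Ioi
      (fun y => y ^ ν * Real.exp (-y - b * y ^ δ - z * y ^ (-(1:ℝ)/2))) 0 hX0
    rw [mul_zero] at h
    have h2 : (∫ u in Ioi (0:ℝ),
        (X*u) ^ ν * Real.exp (-(X*u) - b * (X*u) ^ δ - z * (X*u) ^ (-(1:ℝ)/2)))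
        = X ^ ν * ∫ u in Ioi (0:ℝ), f14 ν b δ X u := by
      rw [← integral_const_mul]
      exact setIntegral_congr_fun measurableSet_Ioi hptw
    rw [h2] at h
    have h3 : X * (X ^ ν * ∫ u in Ioi (0:ℝ), f14 ν b δ X u)
        = X * (X⁻¹ • ∫ y in Ioi (0:ℝ), y ^ ν * Real.exp (-y - b * y ^ δ - z * y ^ (-(1:ℝ)/2))) := by
      rw [h]
    rw [smul_eq_mul, ← mul_assoc, ← mul_assoc, mul_inv_cancel₀ hX0.ne', one_mul] at h3
    rw [← h3, Real.rpow_add hX0, Real.rpow_one]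
    ring
  have hg1 : (z^2/4) ^ ((2*ν+1)/6) = X ^ (ν + 1/2) := by
    rw [hXdef, ← Real.rpow_mul hq.le]
    congr 1
    ring
  have hg2 : (z^2/4) ^ (δ/3) = X ^ δ := by
    rw [hXdef, ← Real.rpow_mul hq.le]
    congr 1
    ring
  rw [hsub, hg1, hg2, ← hcc]
  rw [show (-3 : ℝ) * X - b * X ^ δ = -(3*X + b*X^δ) by ring, Real.exp_neg,
    show (ν+1 : ℝ) = (ν+1/2) + (1/2) by ring, Real.rpow_add hX0, ← Real.sqrt_eq_rpow]
  have hne1 : X ^ (ν+1/2) ≠ 0 := (Real.rpow_pos_of_pos hX0 _).ne'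
  have hne2 : Real.exp (3*X + b*X^δ) ≠ 0 := (Real.exp_pos _).ne'
  have hne3 : Real.sqrt X ≠ 0 := (Real.sqrt_pos.mpr hX0).ne'
  field_simp
end central
end

section
/- Let b > 0, δ > 0 and ν be real, and let s ∈ ℂ satisfy Re(s) > 0 and ν + Re(s)/2 > −1. Then the Mellin transform at s of the function z ↦ ∫₀^∞ y^ν e^{−y − b y^δ − z y^{−1/2}} dy (defined for z > 0) equals Γ(s) · ∫₀^∞ y^{ν + s/2} e^{−y − b y^δ} dy. -/
open MeasureTheory Set

private lemma aux_int {a c : ℝ} (ha : -1 < a) (hc : 0 < c) :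
    IntegrableOn (fun t : ℝ => t ^ a * Real.exp (-(c * t))) (Set.Ioi 0) := by
  have := integrableOn_rpow_mul_exp_neg_mul_rpow ha one_pos hc
  simpa [Real.rpow_one, neg_mul] using this

private lemma aux_int2 {a b δ : ℝ} (ha : -1 < a) (hb : 0 < b) (hδ : 0 < δ) :
    IntegrableOn (fun y : ℝ => y ^ a * Real.exp (-y - b * y ^ δ)) (Set.Ioi 0) := by
  have hcont : ContinuousOn (fun y : ℝ => y ^ a * Real.exp (-y - b * y ^ δ)) (Set.Ioi 0) := by
    intro y hy
    have h1 : ContinuousAt (fun y : ℝ => y ^ a) y :=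
      Real.continuousAt_rpow_const y a (Or.inl (ne_of_gt hy))
    have h2 : ContinuousAt (fun y : ℝ => y ^ δ) y :=
      Real.continuousAt_rpow_const y δ (Or.inl (ne_of_gt hy))
    exact (h1.mul ((continuousAt_id.neg.sub (continuousAt_const.mul h2)).rexp)).continuousWithinAt
  refine Integrable.mono' (aux_int ha one_pos) (hcont.aestronglyMeasurable measurableSet_Ioi) ?_
  filter_upwards [ae_restrict_mem measurableSet_Ioi] with y hy
  rw [Real.norm_eq_abs, abs_mul, abs_of_nonneg (Real.rpow_nonneg (le_of_lt hy) _),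
    Real.abs_exp, one_mul]
  have h0 : (0:ℝ) ≤ b * y ^ δ := mul_nonneg (le_of_lt hb) (Real.rpow_nonneg (le_of_lt hy) δ)
  exact mul_le_mul_of_nonneg_left (Real.exp_le_exp.2 (by linarith)) (Real.rpow_nonneg (le_of_lt hy) a)

theorem stmt17 (b δ ν : ℝ) (hb : 0 < b) (hδ : 0 < δ) (s : ℂ)
    (hs : 0 < s.re) (hνs : -1 < ν + s.re / 2) :
    mellin (fun z : ℝ =>
        ((∫ y in Set.Ioi (0:ℝ), y ^ ν * Real.exp (-y - b * y ^ δ - z * y ^ (-(1:ℝ)/2)) : ℝ) : ℂ)) s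
      = Complex.Gamma s *
          ∫ y in Set.Ioi (0:ℝ),
            (y : ℂ) ^ ((ν : ℂ) + s / 2) * (Real.exp (-y - b * y ^ δ) : ℂ) := by
  set F : ℝ → ℝ → ℂ := fun z y =>
    (z : ℂ) ^ (s - 1) * ((y ^ ν * Real.exp (-y - b * y ^ δ - z * y ^ (-(1:ℝ)/2)) : ℝ) : ℂ) with hF
  -- measurability of the two-variable function
  have hGm : AEStronglyMeasurable (Function.uncurry F)
      ((volume.restrict (Ioi 0)).prod (volume.restrict (Ioi 0))) := by
    rw [Measure.prod_restrict]
    refine ContinuousOn.aestronglyMeasurable ?_ (measurableSet_Ioi.prod measurableSet_Ioi)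
    intro p hp
    obtain ⟨h1, h2⟩ := hp
    apply ContinuousAt.continuousWithinAt
    have hz : ContinuousAt (fun p : ℝ × ℝ => ((p.1 : ℂ)) ^ (s - 1)) p := by
      exact ContinuousAt.comp (g := fun x : ℂ => x ^ (s - 1)) (f := fun p : ℝ × ℝ => (p.1 : ℂ))
        (continuousAt_cpow_const (Complex.ofReal_mem_slitPlane.2 h1))
        ((Complex.continuous_ofReal.comp continuous_fst).continuousAt)
    have hyν : ContinuousAt (fun p : ℝ × ℝ => p.2 ^ ν) p :=
      (Real.continuousAt_rpow_const _ _ (Or.inl (ne_of_gt h2))).comp continuousAt_snd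
    have hyδ : ContinuousAt (fun p : ℝ × ℝ => p.2 ^ δ) p :=
      (Real.continuousAt_rpow_const _ _ (Or.inl (ne_of_gt h2))).comp continuousAt_snd
    have hym : ContinuousAt (fun p : ℝ × ℝ => p.2 ^ (-(1:ℝ)/2)) p :=
      (Real.continuousAt_rpow_const _ _ (Or.inl (ne_of_gt h2))).comp continuousAt_snd
    have hexp : ContinuousAt
        (fun p : ℝ × ℝ => Real.exp (-p.2 - b * p.2 ^ δ - p.1 * p.2 ^ (-(1:ℝ)/2))) p :=
      ((continuousAt_snd.neg.sub (continuousAt_const.mul hyδ)).sub (continuousAt_fst.mul hym)).rexp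
    exact hz.mul (Complex.continuous_ofReal.continuousAt.comp (hyν.mul hexp))
  -- norm identity
  have hnorm : ∀ z ∈ Ioi (0:ℝ), ∀ y ∈ Ioi (0:ℝ),
      ‖F z y‖ = (y ^ ν * Real.exp (-y - b * y ^ δ)) *
        (z ^ (s.re - 1) * Real.exp (-(y ^ (-(1:ℝ)/2) * z))) := by
    intro z hz y hy
    have hE : -y - b * y ^ δ - z * y ^ (-(1:ℝ)/2)
        = (-y - b * y ^ δ) + (-(y ^ (-(1:ℝ)/2) * z)) := by ring
    rw [hF]
    simp only
    simp only [norm_mul]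
    rw [Complex.norm_cpow_eq_rpow_re_of_pos hz,
      Complex.norm_real, Real.norm_eq_abs, Complex.sub_re, Complex.one_re,
      abs_of_nonneg (mul_nonneg (Real.rpow_nonneg (le_of_lt hy) ν) (Real.exp_nonneg _)),
      hE, Real.exp_add]
    ring
  -- integrability of the two-variable function
  have hInt : Integrable (Function.uncurry F)
      ((volume.restrict (Ioi 0)).prod (volume.restrict (Ioi 0))) := by
    rw [integrable_prod_iff' hGm]
    constructor
    · filter_upwards [ae_restrict_mem measurableSet_Ioi] with y hy
      have hc : 0 < y ^ (-(1:ℝ)/2) := Real.rpow_pos_of_pos hy _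
      have hmeasz : AEStronglyMeasurable (fun z => F z y) (volume.restrict (Ioi 0)) := by
        refine ContinuousOn.aestronglyMeasurable ?_ measurableSet_Ioi
        intro z hz
        apply ContinuousAt.continuousWithinAt
        refine ContinuousAt.mul ?_ ?_
        · exact (continuousAt_cpow_const (Complex.ofReal_mem_slitPlane.2 hz)).comp
            Complex.continuous_ofReal.continuousAt
        · exact Complex.continuous_ofReal.continuousAt.comp
            (continuousAt_const.mul
              (((continuousAt_const.sub continuousAt_const).sub
                (continuousAt_id.mul continuousAt_const)).rexp))
      refine Integrable.mono'
        (((aux_int (by linarith : (-1:ℝ) < s.re - 1) hc)).const_mul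
          (y ^ ν * Real.exp (-y - b * y ^ δ))) hmeasz ?_
      filter_upwards [ae_restrict_mem measurableSet_Ioi] with z hz
      exact le_of_eq (hnorm z hz y hy)
    · have hcongr : ∀ᵐ y ∂(volume.restrict (Ioi (0:ℝ))),
          (fun y => Real.Gamma s.re * (y ^ (ν + s.re / 2) * Real.exp (-y - b * y ^ δ))) y
          = (fun y => ∫ z, ‖Function.uncurry F (z, y)‖ ∂(volume.restrict (Ioi 0))) y := by
        filter_upwards [ae_restrict_mem measurableSet_Ioi] with y hy
        have hc : 0 < y ^ (-(1:ℝ)/2) := Real.rpow_pos_of_pos hy _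
        have h1 : ∫ z, ‖Function.uncurry F (z, y)‖ ∂(volume.restrict (Ioi 0))
            = (y ^ ν * Real.exp (-y - b * y ^ δ)) *
              ∫ z in Ioi (0:ℝ), z ^ (s.re - 1) * Real.exp (-(y ^ (-(1:ℝ)/2) * z)) := by
          rw [← integral_const_mul]
          exact setIntegral_congr_fun measurableSet_Ioi (fun z hz => hnorm z hz y hy)
        rw [h1, Real.integral_rpow_mul_exp_neg_mul_Ioi hs hc]
        have h2 : (1 / y ^ (-(1:ℝ)/2)) = y ^ ((1:ℝ)/2) := by
          rw [show (-(1:ℝ)/2) = -((1:ℝ)/2) by norm_num, Real.rpow_neg (le_of_lt hy), one_div,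
            inv_inv]
        rw [h2, ← Real.rpow_mul (le_of_lt hy), Real.rpow_add hy,
          show (1:ℝ)/2 * s.re = s.re/2 by ring]
        ring
      refine Integrable.congr (((aux_int2 hνs hb hδ).const_mul (Real.Gamma s.re))) hcongr
  -- main computation
  simp only [mellin, smul_eq_mul]
  have h0 : ∀ z : ℝ,
      ((∫ y in Set.Ioi (0:ℝ), y ^ ν * Real.exp (-y - b * y ^ δ - z * y ^ (-(1:ℝ)/2)) : ℝ) : ℂ)
      = ∫ y in Set.Ioi (0:ℝ),
          ((y ^ ν * Real.exp (-y - b * y ^ δ - z * y ^ (-(1:ℝ)/2)) : ℝ) : ℂ) :=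
    fun z => integral_ofReal.symm
  simp_rw [h0, ← integral_const_mul]
  show (∫ z in Ioi (0:ℝ), ∫ y in Ioi (0:ℝ), F z y) = _
  rw [MeasureTheory.integral_integral_swap hInt]
  refine setIntegral_congr_fun measurableSet_Ioi (fun y hy => ?_)
  have hy0 : (y:ℂ) ≠ 0 := Complex.ofReal_ne_zero.2 (ne_of_gt hy)
  have hc : 0 < y ^ (-(1:ℝ)/2) := Real.rpow_pos_of_pos hy _
  have step1 : (∫ z in Ioi (0:ℝ), F z y)
      = ((y ^ ν * Real.exp (-y - b * y ^ δ) : ℝ) : ℂ) *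
        ∫ z in Ioi (0:ℝ), (z:ℂ) ^ (s - 1) *
          Complex.exp (-((y ^ (-(1:ℝ)/2) : ℝ) * (z:ℝ) : ℂ)) := by
    rw [← integral_const_mul]
    refine setIntegral_congr_fun measurableSet_Ioi (fun z hz => ?_)
    show (z:ℂ) ^ (s - 1) *
        ((y ^ ν * Real.exp (-y - b * y ^ δ - z * y ^ (-(1:ℝ)/2)) : ℝ) : ℂ) = _
    rw [show -y - b * y ^ δ - z * y ^ (-(1:ℝ)/2)
        = (-y - b * y ^ δ) + (-(y ^ (-(1:ℝ)/2) * z)) by ring, Real.exp_add]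
    push_cast [Complex.ofReal_exp]
    ring
  rw [step1, Complex.integral_cpow_mul_exp_neg_mul_Ioi hs hc]
  have e1 : (1 : ℂ) / ((y ^ (-(1:ℝ)/2) : ℝ) : ℂ) = ((y ^ ((1:ℝ)/2) : ℝ) : ℂ) := by
    rw [show (-(1:ℝ)/2) = -((1:ℝ)/2) by norm_num, Real.rpow_neg (le_of_lt hy)]
    push_cast
    rw [one_div, inv_inv]
  have e2 : ((y ^ ((1:ℝ)/2) : ℝ) : ℂ) ^ s = (y : ℂ) ^ (s / 2) := by
    rw [← Complex.cpow_mul_ofReal_nonneg (le_of_lt hy)]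
    congr 1
    push_cast
    ring
  rw [e1, e2, show ((y:ℂ)) ^ ((ν:ℂ) + s/2) = (y:ℂ) ^ (ν:ℂ) * (y:ℂ) ^ (s/2) from
    Complex.cpow_add _ _ hy0, ← Complex.ofReal_cpow (le_of_lt hy)]
  push_cast
  ring
end
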